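/- Let E be a Euclidean vector space of dimension n > 2 and let m ≥ 1. If W : E \ {0} → ℝ is a continuous function, homogeneous of degree m, such that the restriction of W to every hyperplane H ⊂ E is a homogeneous polynomial of degree m, then W is a homogeneous polynomial of degree m on E. -/

import Mathlib

open scoped RealInnerProductSpace

noncomputable section

abbrev E (n : ℕ) := EuclideanSpace ℝ (Fin n)

/-- Evaluation of a polynomial in `n` variables at a point of Euclidean space. -/
def evalP {n : ℕ} (P : MvPolynomial (Fin n) ℝ) (v : E n) : ℝ :=
  MvPolynomial.eval (fun i => v i) P

open Polynomial Module

private lemma evalSmul {n m : ℕ} {P : MvPolynomial (Fin n) ℝ} (h : P.IsHomogeneous m)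
    (t : ℝ) (x : Fin n → ℝ) : MvPolynomial.eval (t • x) P = t ^ m * MvPolynomial.eval x P := by
  rw [MvPolynomial.eval_eq, MvPolynomial.eval_eq, Finset.mul_sum]
  apply Finset.sum_congr rfl
  intro d hd
  have hdeg : ∑ i ∈ d.support, d i = m := by
    have := h (MvPolynomial.mem_support_iff.mp hd)
    rw [Finsupp.weight_apply] at this
    simpa [Finsupp.sum] using this
  calc MvPolynomial.coeff d P * ∏ i ∈ d.support, (t • x) i ^ d i
      = MvPolynomial.coeff d P * ((∏ i ∈ d.support, t ^ d i) * ∏ i ∈ d.support, x i ^ d i) := by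
        rw [← Finset.prod_mul_distrib]; simp [mul_pow]
    _ = t ^ m * (MvPolynomial.coeff d P * ∏ i ∈ d.support, x i ^ d i) := by
        rw [Finset.prod_pow_eq_pow_sum, hdeg]; ring

private lemma natDegAeval {n : ℕ} (g : Fin n → ℝ[X]) (hg : ∀ j, (g j).natDegree ≤ 1)
    (P : MvPolynomial (Fin n) ℝ) : (MvPolynomial.aeval g P).natDegree ≤ P.totalDegree := by
  rw [MvPolynomial.aeval_def, MvPolynomial.eval₂_eq]
  refine (Polynomial.natDegree_sum_le _ _).trans ?_
  rw [Finset.fold_max_le]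
  refine ⟨Nat.zero_le _, fun d hd => ?_⟩
  refine (Polynomial.natDegree_mul_le).trans ?_
  have h1 : ((algebraMap ℝ ℝ[X]) (MvPolynomial.coeff d P)).natDegree = 0 := by
    simp [Polynomial.natDegree_C]
  rw [h1, zero_add]
  refine (Polynomial.natDegree_prod_le _ _).trans ?_
  calc ∑ i ∈ d.support, ((g i) ^ d i).natDegree
      ≤ ∑ i ∈ d.support, d i := by
        refine Finset.sum_le_sum fun i _ => ?_
        refine (Polynomial.natDegree_pow_le).trans ?_
        calc d i * (g i).natDegree ≤ d i * 1 := Nat.mul_le_mul_left _ (hg i)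
          _ = d i := Nat.mul_one _
    _ ≤ P.totalDegree := MvPolynomial.le_totalDegree hd

private lemma evalAeval {n : ℕ} (g : Fin n → ℝ[X]) (P : MvPolynomial (Fin n) ℝ) (t : ℝ) :
    Polynomial.eval t (MvPolynomial.aeval g P) = MvPolynomial.eval (fun j => (g j).eval t) P := by
  have h2 : (Polynomial.aeval t) (MvPolynomial.aeval g P)
      = MvPolynomial.aeval (fun j => Polynomial.aeval t (g j)) P := by
    rw [← MvPolynomial.comp_aeval]; rfl
  simp only [Polynomial.aeval_def, Polynomial.eval₂_at_apply, MvPolynomial.eval₂_id, Polynomial.eval,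
    Algebra.algebraMap_self, ← MvPolynomial.coe_aeval_eq_eval, RingHomClass.toRingHom] at h2 ⊢
  exact h2

private lemma lagrangeId (m : ℕ) (p : ℝ[X]) (hp : p.natDegree ≤ m) (t : ℝ) :
    p.eval t = ∑ r ∈ Finset.range (m+1),
      p.eval (r : ℝ) * (Lagrange.basis (Finset.range (m+1)) (Nat.cast : ℕ → ℝ) r).eval t := by
  have hinj : Set.InjOn (Nat.cast : ℕ → ℝ) (Finset.range (m+1)) :=
    (Nat.cast_injective).injOn
  have hdeg : p.degree < (Finset.range (m+1)).card := by
    rw [Finset.card_range]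
    exact lt_of_le_of_lt (Polynomial.degree_le_natDegree.trans (Nat.cast_le.mpr hp))
      (by exact_mod_cast Nat.lt_succ_self m)
  have h := Lagrange.eq_interpolate hinj hdeg
  conv_lhs => rw [h]
  rw [Lagrange.interpolate_apply, Polynomial.eval_finset_sum]
  simp [Polynomial.eval_mul]

private lemma existsHyperplane {n : ℕ} (hn : 2 < n) (a b : E n) :
    ∃ H : Submodule ℝ (E n), Module.finrank ℝ H = n - 1 ∧ a ∈ H ∧ b ∈ H := by
  classical
  set K : Submodule ℝ (E n) := Submodule.span ℝ {a, b} with hK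
  have hEn : finrank ℝ (E n) = n := finrank_euclideanSpace_fin
  have hKle : finrank ℝ K ≤ 2 := by
    refine le_trans (finrank_span_le_card ({a, b} : Set (E n))) ?_
    rw [Set.toFinset_insert, Set.toFinset_singleton]
    exact (Finset.card_insert_le _ _).trans (by simp)
  have hne : Kᗮ ≠ ⊥ := by
    intro h
    rw [Submodule.orthogonal_eq_bot_iff] at h
    have : finrank ℝ K = n := by rw [h, finrank_top, hEn]
    omega
  obtain ⟨u, hu, hune⟩ := Submodule.exists_mem_ne_zero_of_ne_bot hne
  have hKH : K ≤ (ℝ ∙ u)ᗮ := by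
    refine le_trans (Submodule.le_orthogonal_orthogonal K) (Submodule.orthogonal_le ?_)
    rwa [Submodule.span_singleton_le_iff_mem]
  refine ⟨(ℝ ∙ u)ᗮ, ?_, hKH (Submodule.subset_span (by simp)),
    hKH (Submodule.subset_span (by simp))⟩
  have h1 : finrank ℝ (ℝ ∙ u) = 1 := finrank_span_singleton hune
  have h2 := Submodule.finrank_add_finrank_orthogonal (K := (ℝ ∙ u)) (𝕜 := ℝ)
  rw [h1, hEn] at h2
  omega

private lemma evalP_aevalX {n : ℕ} (p : ℝ[X]) (κ : Fin n) (v : E n) :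
    evalP (Polynomial.aeval (MvPolynomial.X κ) p) v = p.eval (v κ) := by
  unfold evalP
  rw [Polynomial.aeval_def, Polynomial.hom_eval₂]
  have h1 : (MvPolynomial.eval fun i => v i).comp
      (algebraMap ℝ (MvPolynomial (Fin n) ℝ)) = RingHom.id ℝ := by
    ext a; simp
  rw [h1, MvPolynomial.eval_X]
  rfl

private lemma constantCoeffZero {n m : ℕ} {P : MvPolynomial (Fin n) ℝ}
    (hP : P.IsHomogeneous m) (hm : 1 ≤ m) : MvPolynomial.constantCoeff P = 0 := by
  have := hP.coeff_eq_zero (d := 0) ?_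
  · simpa [MvPolynomial.constantCoeff_eq] using this
  · simp [Finsupp.degree]; omega

/-- A function `W : E \ {0} → ℝ`, continuous and positively homogeneous of degree `m`,
whose restriction to every hyperplane is a homogeneous polynomial of degree `m`,
is a homogeneous polynomial of degree `m` on all of `E`. -/
theorem xray_stmt0 {n m : ℕ} (hn : 2 < n) (hm : 1 ≤ m) (W : E n → ℝ)
    (hc : ContinuousOn W {v : E n | v ≠ 0})
    (hhom : ∀ t : ℝ, 0 < t → ∀ v : E n, v ≠ 0 → W (t • v) = t ^ m * W v)
    (hres : ∀ H : Submodule ℝ (E n), Module.finrank ℝ H = n - 1 →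
      ∃ P : MvPolynomial (Fin n) ℝ, P.IsHomogeneous m ∧ ∀ v ∈ H, v ≠ (0 : E n) → W v = evalP P v) :
    ∃ P : MvPolynomial (Fin n) ℝ, P.IsHomogeneous m ∧ ∀ v : E n, v ≠ 0 → W v = evalP P v := by
  classical
  set f : E n → ℝ := fun v => if v = 0 then 0 else W v with hfdef
  have hf0 : f 0 = 0 := by simp [hfdef]
  have hfW : ∀ v : E n, v ≠ 0 → f v = W v := fun v hv => by simp [hfdef, hv]
  -- upgrade hres to cover 0 as well, with the modified function f
  have hres' : ∀ H : Submodule ℝ (E n), finrank ℝ H = n - 1 →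
      ∃ P : MvPolynomial (Fin n) ℝ, P.IsHomogeneous m ∧ ∀ v ∈ H, f v = evalP P v := by
    intro H hH
    obtain ⟨P, hP, hPe⟩ := hres H hH
    refine ⟨P, hP, fun v hv => ?_⟩
    by_cases h0 : v = 0
    · subst h0
      rw [hf0]
      show (0:ℝ) = MvPolynomial.eval (fun i => (0 : E n) i) P
      have h1 : (fun i => (0 : E n) i) = (0 : Fin n → ℝ) := rfl
      rw [h1, MvPolynomial.eval_zero]
      exact (constantCoeffZero hP hm).symm
    · rw [hfW v h0]; exact hPe v hv h0
  -- f is a polynomial of degree at most m on each axis-parallel line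
  have axisPoly : ∀ (z : E n) (κ : Fin n), ∃ p : ℝ[X], p.natDegree ≤ m ∧
      ∀ t : ℝ, f (WithLp.toLp 2 (Function.update z κ t)) = p.eval t := by
    intro z κ
    set z' : E n := WithLp.toLp 2 (Function.update z κ 0) with hz'
    set e : E n := WithLp.toLp 2 (fun i => if i = κ then 1 else 0 : Fin n → ℝ) with he
    obtain ⟨H, hH, hz'H, heH⟩ := existsHyperplane hn z' e
    obtain ⟨P, hP, hPe⟩ := hres' H hH
    set g : Fin n → ℝ[X] :=
      fun j => Polynomial.C (z' j) + Polynomial.C (e j) * Polynomial.X with hg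
    refine ⟨MvPolynomial.aeval g P, ?_, ?_⟩
    · refine (natDegAeval g (fun j => ?_) P).trans hP.totalDegree_le
      refine (Polynomial.natDegree_add_le _ _).trans ?_
      simp only [Polynomial.natDegree_C, Nat.max_le, Nat.zero_le, true_and]
      exact (Polynomial.natDegree_C_mul_le _ _).trans (by simp)
    · intro t
      have hupd : WithLp.toLp 2 (Function.update z κ t) = z' + t • e := by
        ext i
        by_cases h : i = κ
        · subst h
          show Function.update z i t i = Function.update z i 0 i + t * _
          simp [he]
        · show Function.update z κ t i = Function.update z κ 0 i + t * _
          simp [Function.update_of_ne h, he, h]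
      have hmem : WithLp.toLp 2 (Function.update z κ t) ∈ H := by
        rw [hupd]; exact H.add_mem hz'H (H.smul_mem t heH)
      rw [hPe _ hmem, evalAeval]
      have hpt : (fun j => (g j).eval t) = (fun i => Function.update z κ t i) := by
        funext j
        by_cases h : j = κ
        · subst h
          show _ = Function.update z j t j
          simp [hg, hz', he]
        · show _ = Function.update z κ t j
          simp [Function.update_of_ne h, hg, hz', he, h]
      rw [hpt]
      rfl
  -- the Lagrange basis polynomials at the nodes 0, 1, ..., m
  set L : ℕ → ℝ[X] :=
    fun r => Lagrange.basis (Finset.range (m+1)) (Nat.cast : ℕ → ℝ) r with hL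
  -- key induction: interpolate the first k coordinates
  have key : ∀ k : ℕ, k ≤ n →
      ∃ (ι : Type) (_ : Fintype ι) (q : ι → MvPolynomial (Fin n) ℝ) (y : ι → E n),
        ∀ x : E n, f x = ∑ j, evalP (q j) x *
          f (WithLp.toLp 2 (fun i : Fin n => if (i : ℕ) < k then y j i else x i)) := by
    intro k
    induction k with
    | zero =>
      intro _
      refine ⟨PUnit, inferInstance, fun _ => 1, fun _ => 0, fun x => ?_⟩
      have hx : WithLp.toLp 2 (fun i : Fin n => if (i : ℕ) < 0 then (0 : E n) i else x i) = x := by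
        ext i; simp
      show f x = ∑ _j : PUnit, evalP 1 x * f (WithLp.toLp 2 (fun i : Fin n => if (i : ℕ) < 0 then (0 : E n) i else x i))
      rw [hx]
      simp [evalP]
    | succ k ih =>
      intro hk1
      obtain ⟨ι, _, q, y, hq⟩ := ih (Nat.le_of_succ_le hk1)
      set κ : Fin n := ⟨k, hk1⟩ with hκ
      refine ⟨ι × Fin (m+1), inferInstance,
        fun jr => q jr.1 * Polynomial.aeval (MvPolynomial.X κ) (L jr.2),
        fun jr => WithLp.toLp 2 (Function.update (y jr.1) κ ((jr.2 : ℕ) : ℝ)), fun x => ?_⟩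
      rw [hq x, Fintype.sum_prod_type]
      refine Finset.sum_congr rfl fun j _ => ?_
      set z : E n := WithLp.toLp 2 (fun i : Fin n => if (i : ℕ) < k then y j i else x i) with hz
      obtain ⟨p, hpd, hpe⟩ := axisPoly z κ
      have hzκ : z κ = x κ := by
        show (if ((κ : Fin n) : ℕ) < k then y j κ else x κ) = x κ
        rw [if_neg (by simp [hκ])]
      have hfz : f z = p.eval (x κ) := by
        conv_lhs => rw [← WithLp.toLp_ofLp (x := z), ← Function.update_eq_self κ z.ofLp]
        rw [hpe (z κ), hzκ]
      have harg : ∀ r : ℕ,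
          WithLp.toLp 2 (fun i : Fin n => if (i : ℕ) < k + 1 then Function.update (y j) κ ((r : ℕ) : ℝ) i else x i)
            = WithLp.toLp 2 (Function.update z κ ((r : ℕ) : ℝ)) := by
        intro r
        congr 1
        funext i
        by_cases h : i = κ
        · subst h
          simp [hκ]
        · have hik : (i : ℕ) ≠ k := fun hh => h (Fin.ext (by simp [hκ, hh]))
          rw [Function.update_of_ne h, Function.update_of_ne h]
          show (if (i : ℕ) < k + 1 then y j i else x i)
            = (if (i : ℕ) < k then y j i else x i)
          by_cases hlt : (i : ℕ) < k
          · rw [if_pos (by omega), if_pos hlt]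
          · rw [if_neg (by omega), if_neg hlt]
      calc evalP (q j) x * f z
          = ∑ r ∈ Finset.range (m+1),
              evalP (q j) x * ((p.eval (r : ℝ)) * (L r).eval (x κ)) := by
            rw [hfz, lagrangeId m p hpd (x κ), Finset.mul_sum]
        _ = ∑ r : Fin (m+1),
              evalP (q j * Polynomial.aeval (MvPolynomial.X κ) (L (r : ℕ))) x *
                f (WithLp.toLp 2 (fun i : Fin n => if (i : ℕ) < k + 1 then
                    Function.update (y j) κ ((r : ℕ) : ℝ) i else x i)) := by
            rw [← Fin.sum_univ_eq_sum_range]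
            refine Finset.sum_congr rfl fun r _ => ?_
            rw [harg (r : ℕ), hpe ((r : ℕ) : ℝ)]
            have hmul : evalP (q j * Polynomial.aeval (MvPolynomial.X κ) (L (r : ℕ))) x
                = evalP (q j) x * (L (r : ℕ)).eval (x κ) := by
              unfold evalP
              rw [map_mul]
              congr 1
              exact evalP_aevalX (L (r : ℕ)) κ x
            rw [hmul]
            ring
        _ = _ := rfl
  -- conclude: f is globally given by a polynomial Q
  obtain ⟨ι, _, q, y, hq⟩ := key n le_rfl
  have hyx : ∀ (j : ι) (x : E n), WithLp.toLp 2 (fun i : Fin n => if (i : ℕ) < n then y j i else x i) = y j := by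
    intro j x; ext i; simp [i.isLt]
  set Q : MvPolynomial (Fin n) ℝ := ∑ j, MvPolynomial.C (f (y j)) * q j with hQdef
  have hfQ : ∀ x : E n, f x = evalP Q x := by
    intro x
    rw [hq x]
    show _ = MvPolynomial.eval (fun i => x i) Q
    rw [hQdef, map_sum]
    refine Finset.sum_congr rfl fun j _ => ?_
    rw [map_mul, MvPolynomial.eval_C, hyx j x]
    show evalP (q j) x * f (y j) = f (y j) * MvPolynomial.eval (fun i => x i) (q j)
    rw [mul_comm]
    rfl
  -- extract the degree-m homogeneous component
  set N : ℕ := max Q.totalDegree m with hN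
  have hQsum : Q = ∑ k ∈ Finset.range (N+1), MvPolynomial.homogeneousComponent k Q := by
    have h1 : ∑ k ∈ Finset.range (Q.totalDegree + 1), MvPolynomial.homogeneousComponent k Q
        = ∑ k ∈ Finset.range (N+1), MvPolynomial.homogeneousComponent k Q :=
      Finset.sum_subset (Finset.range_subset_range.mpr (Nat.succ_le_succ (le_max_left _ _)))
        (fun k _ hk => MvPolynomial.homogeneousComponent_eq_zero k Q
          (by simp only [Finset.mem_range, not_lt] at hk; omega))
    conv_lhs => rw [← MvPolynomial.sum_homogeneousComponent (φ := Q)]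
    exact h1
  refine ⟨MvPolynomial.homogeneousComponent m Q,
    MvPolynomial.homogeneousComponent_isHomogeneous m Q, fun v hv => ?_⟩
  set p₁ : ℝ[X] := ∑ k ∈ Finset.range (N+1),
    Polynomial.C (evalP (MvPolynomial.homogeneousComponent k Q) v) * Polynomial.X ^ k with hp₁
  set q₁ : ℝ[X] := Polynomial.C (evalP Q v) * Polynomial.X ^ m with hq₁
  have heval : ∀ t : ℝ, evalP Q (t • v) = p₁.eval t := by
    intro t
    have hpt : (fun i => (t • v) i) = t • (fun i => v i) := rfl
    show MvPolynomial.eval _ Q = _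
    rw [hpt]
    conv_lhs => rw [hQsum]
    rw [map_sum, hp₁, Polynomial.eval_finset_sum]
    refine Finset.sum_congr rfl fun k _ => ?_
    rw [evalSmul (MvPolynomial.homogeneousComponent_isHomogeneous k Q) t (fun i => v i)]
    simp [evalP]
    ring
  have hroots : ∀ t : ℝ, 0 < t → p₁.eval t = q₁.eval t := by
    intro t ht
    have htv : t • v ≠ 0 := smul_ne_zero (ne_of_gt ht) hv
    have h1 : evalP Q (t • v) = t ^ m * evalP Q v := by
      rw [← hfQ (t • v), hfW _ htv, hhom t ht v hv, ← hfW v hv, hfQ v]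
    rw [← heval t, h1, hq₁, Polynomial.eval_mul, Polynomial.eval_C, Polynomial.eval_pow,
      Polynomial.eval_X]
    ring
  have hpq : p₁ = q₁ := by
    have h0 : (p₁ - q₁) = 0 := by
      apply Polynomial.eq_zero_of_infinite_isRoot
      apply Set.Infinite.mono (s := Set.Ioi (0:ℝ)) _ (Set.Ioi_infinite 0)
      intro t ht
      simp only [Set.mem_setOf_eq, Polynomial.IsRoot, Polynomial.eval_sub, sub_eq_zero]
      exact hroots t ht
    exact sub_eq_zero.mp h0
  have hcoeff : evalP (MvPolynomial.homogeneousComponent m Q) v = evalP Q v := by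
    have h1 : p₁.coeff m = evalP (MvPolynomial.homogeneousComponent m Q) v := by
      rw [hp₁, Polynomial.finset_sum_coeff]
      rw [Finset.sum_eq_single m]
      · simp
      · intro k _ hk
        simp [Polynomial.coeff_C_mul, Polynomial.coeff_X_pow, Ne.symm hk]
      · intro hmem
        exact absurd (Finset.mem_range.mpr (by omega)) hmem
    have h2 : q₁.coeff m = evalP Q v := by
      simp [hq₁, Polynomial.coeff_C_mul, Polynomial.coeff_X_pow]
    rw [← h1, hpq, h2]
  calc W v = f v := (hfW v hv).symm
    _ = evalP Q v := hfQ v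
    _ = evalP ((MvPolynomial.homogeneousComponent m) Q) v := hcoeff.symm
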